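/- Define c₁ = sup_{x ∈ ℝ} (1 + 4x⁴ + 8x⁶ - x⁸). Then c₁ is finite and positive, and for all x, y ∈ ℝ and t ≥ 0: 6x⁵(-x³ - y) + (15/4)x⁴e^{-t} ≤ c₁ - 2(1 + 1.5x⁶ + 2.5x⁸) + (1 + 1.5y⁶ + 2.5y⁸). -/
import Mathlib


open Real

lemma poly_bdd : BddAbove (Set.range fun x : ℝ => 1 + 4 * x ^ 4 + 8 * x ^ 6 - x ^ 8) := by
  refine ⟨10000, ?_⟩
  rintro _ ⟨x, rfl⟩
  simp only
  nlinarith [sq_nonneg (x^4 - 4*x^2 - 10), sq_nonneg (x^2 - 40), sq_nonneg (x^2), sq_nonneg x]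

/-- With `c₁ = sup_{x ∈ ℝ} (1 + 4x⁴ + 8x⁶ - x⁸)` (finite, i.e. the range is bounded
above, and positive), for all `x, y ∈ ℝ` and `t ≥ 0`:
`6x⁵(-x³ - y) + (15/4)x⁴e^{-t} ≤ c₁ - 2(1 + 1.5x⁶ + 2.5x⁸) + (1 + 1.5y⁶ + 2.5y⁸)`. -/
theorem lyapunov_sup_bound :
    BddAbove (Set.range fun x : ℝ => 1 + 4 * x ^ 4 + 8 * x ^ 6 - x ^ 8) ∧
    0 < sSup (Set.range fun x : ℝ => 1 + 4 * x ^ 4 + 8 * x ^ 6 - x ^ 8) ∧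
    ∀ x y t : ℝ, 0 ≤ t →
      6 * x ^ 5 * (-x ^ 3 - y) + (15 / 4) * x ^ 4 * Real.exp (-t)
        ≤ sSup (Set.range fun x : ℝ => 1 + 4 * x ^ 4 + 8 * x ^ 6 - x ^ 8)
          - 2 * (1 + 1.5 * x ^ 6 + 2.5 * x ^ 8) + (1 + 1.5 * y ^ 6 + 2.5 * y ^ 8) := by
  have hb := poly_bdd
  have hmem : ∀ x : ℝ, (1 + 4 * x ^ 4 + 8 * x ^ 6 - x ^ 8)
      ≤ sSup (Set.range fun x : ℝ => 1 + 4 * x ^ 4 + 8 * x ^ 6 - x ^ 8) := fun x =>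
    le_csSup hb ⟨x, rfl⟩
  refine ⟨hb, ?_, ?_⟩
  · have := hmem 0
    norm_num at this
    linarith
  · intro x y t ht
    have hS := hmem x
    have hexp : Real.exp (-t) ≤ 1 := by
      rw [Real.exp_le_one_iff]; linarith
    have hx4 : (0:ℝ) ≤ x ^ 4 := by positivity
    have hexp' : (15/4) * x ^ 4 * Real.exp (-t) ≤ (15/4) * x ^ 4 := by
      nlinarith
    have hamgm : -(6 * x ^ 5 * y) ≤ 5 * x ^ 6 + y ^ 6 := by
      nlinarith [sq_nonneg (x^3 + y^3), sq_nonneg (x^2*y + x^3), sq_nonneg (x*y^2 + x^3), sq_nonneg (x^3 - x*y^2), sq_nonneg (x^3 - x^2*y), sq_nonneg x, sq_nonneg y, sq_nonneg (x*y)]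
    nlinarith [sq_nonneg (y^3), sq_nonneg (y^4)]
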